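/- Let K be a symmetric convex body in R^n and u a unit vector. For every z ∈ Ru, the hyperplane slice of the polar of the Steiner symmetral satisfies ((S_u K)^o - z) ∩ u^⊥ ⊇ ½[((K^o - z) ∩ u^⊥) + ((K^o + z) ∩ u^⊥)]. -/

import Mathlib

open MeasureTheory Set Pointwise
open scoped InnerProductSpace ENNReal

noncomputable section

/-- `ℝ^n` with the Euclidean structure. -/
abbrev E (n : ℕ) := EuclideanSpace ℝ (Fin n)

/-- The polar body `K° = {y : ∀ x ∈ K, ⟨x,y⟩ ≤ 1}`. -/
def polarBody {n : ℕ} (K : Set (E n)) : Set (E n) := {y | ∀ x ∈ K, ⟪x, y⟫_ℝ ≤ 1}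

/-- A set is unconditional if it is invariant under coordinate-wise sign changes. -/
def Uncond {n : ℕ} (K : Set (E n)) : Prop :=
  ∀ x ∈ K, ∀ ε : Fin n → ℝ, (∀ i, ε i = 1 ∨ ε i = -1) →
    (WithLp.toLp 2 (fun i => ε i * x i) : E n) ∈ K

/-- A convex body: compact, convex, with nonempty interior. -/
def IsConvexBody {n : ℕ} (K : Set (E n)) : Prop :=
  IsCompact K ∧ Convex ℝ K ∧ (interior K).Nonempty

/-- The Steiner symmetral of `K` in direction `u`: over each point of `u^⊥` the fiber
`K_y` is replaced by `(K_y + (-K_y))/2`. -/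
def steiner {n : ℕ} (u : E n) (K : Set (E n)) : Set (E n) :=
  {x | ∃ s t : ℝ, (x - ⟪x, u⟫_ℝ • u + s • u) ∈ K ∧ (x - ⟪x, u⟫_ℝ • u + t • u) ∈ K ∧
    ⟪x, u⟫_ℝ = (s - t) / 2}

/-- The geometric mean body `K^{1/2} L^{1/2}`. -/
def geomMean {n : ℕ} (K L : Set (E n)) : Set (E n) :=
  {z | ∃ x ∈ K, ∃ y ∈ L, ∀ i, |z i| = |x i| ^ ((1 : ℝ) / 2) * |y i| ^ ((1 : ℝ) / 2)}

theorem blaschke_santalo_stmt (n : ℕ) (K : Set (E n)) (hK : IsConvexBody K)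
    (hsym : K = -K) (u : E n) (hu : ‖u‖ = 1) (c : ℝ) (z : E n) (hz : z = c • u) :
    (2⁻¹ : ℝ) • ({w : E n | ⟪w, u⟫_ℝ = 0 ∧ w + z ∈ polarBody K} +
        {w : E n | ⟪w, u⟫_ℝ = 0 ∧ w - z ∈ polarBody K}) ⊆
      {w : E n | ⟪w, u⟫_ℝ = 0 ∧ w + z ∈ polarBody (steiner u K)} := by
  rintro w hw
  obtain ⟨v, hv, rfl⟩ := hw
  obtain ⟨a, ⟨ha0, haK⟩, b, ⟨hb0, hbK⟩, rfl⟩ := hv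
  have huu : ⟪u, u⟫_ℝ = 1 := by
    rw [real_inner_self_eq_norm_sq, hu]; norm_num
  have hua : ⟪u, a⟫_ℝ = 0 := by rw [real_inner_comm]; exact ha0
  have hub : ⟪u, b⟫_ℝ = 0 := by rw [real_inner_comm]; exact hb0
  constructor
  · simp [inner_smul_left, inner_add_left, ha0, hb0]
  · rintro x ⟨s, t, hs, ht, hst⟩
    have h1 := haK _ hs
    have h2 := hbK _ ht
    subst hz
    simp only [inner_add_right, inner_sub_right, inner_add_left, inner_sub_left, inner_smul_left,
      inner_smul_right, hua, hub, huu, map_ofNat, conj_trivial] at h1 h2 ⊢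
    rw [hst] at h1 h2 ⊢
    ring_nf at h1 h2 ⊢
    linarith
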